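/- Let p = 2k+1 be an odd prime. In the integral group ring R = ℤ[G] of the Klein four-group G, the element u = (k+1)·1 + k·a (where a is the image of the first generator of G, so a² = 1) is a non-zero-divisor; that is, the map R → R given by multiplication by u is injective. -/

import Mathlib

private abbrev R4 : Type := MonoidAlgebra ℤ (Multiplicative (ZMod 2 × ZMod 2))

private noncomputable abbrev a4 : R4 := MonoidAlgebra.of ℤ (Multiplicative (ZMod 2 × ZMod 2))
  (Multiplicative.ofAdd ((1 : ZMod 2), (0 : ZMod 2)))

lemma klein_aux (p k : ℕ) (hp : p.Prime) (hpk : p = 2 * k + 1)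
    (x y : R4)
    (h : (((k : R4) + 1) + (k : R4) * a4) * x = (((k : R4) + 1) + (k : R4) * a4) * y) :
    x = y := by
  have ha : a4 * a4 = 1 := by
    rw [show a4 * a4 = MonoidAlgebra.of ℤ (Multiplicative (ZMod 2 × ZMod 2))
        ((Multiplicative.ofAdd ((1 : ZMod 2), (0 : ZMod 2))) *
         (Multiplicative.ofAdd ((1 : ZMod 2), (0 : ZMod 2)))) from (map_mul _ _ _).symm]
    have : (Multiplicative.ofAdd ((1 : ZMod 2), (0 : ZMod 2))) *
        (Multiplicative.ofAdd ((1 : ZMod 2), (0 : ZMod 2))) = 1 := by decide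
    rw [this, map_one]
  have key : (((k : R4) + 1) - (k : R4) * a4) * (((k : R4) + 1) + (k : R4) * a4)
      = ((p : ℤ) : R4) := by
    have expand : (((k : R4) + 1) - (k : R4) * a4) * (((k : R4) + 1) + (k : R4) * a4)
        = ((k : R4) + 1) ^ 2 - (k : R4) ^ 2 * (a4 * a4) := by ring
    rw [expand, ha, mul_one, hpk]
    push_cast
    ring
  have h2 : ((p : ℤ) : R4) * (x - y) = 0 := by
    rw [← key, mul_sub, mul_assoc, mul_assoc, h, sub_self]
  have h3 : (p : ℤ) • (x - y) = 0 := by rw [zsmul_eq_mul]; exact h2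
  have hp0 : (p : ℤ) ≠ 0 := by exact_mod_cast hp.ne_zero
  have h4 : x - y = 0 := by
    refine MonoidAlgebra.ext (Finsupp.ext fun g => ?_)
    have : ((p : ℤ) • (x - y)).coeff g = (0 : R4).coeff g := by rw [h3]
    rw [MonoidAlgebra.coeff_smul_apply, smul_eq_mul] at this
    simpa using (mul_eq_zero.mp this).resolve_left hp0
  exact sub_eq_zero.mp h4

/-- Let `p = 2k+1` be an odd prime. In the integral group ring `R = ℤ[G]` of the Klein
four-group `G`, the element `u = (k+1)·1 + k·a` (with `a` the image of the first generator,
so `a² = 1`) is a non-zero-divisor: multiplication by `u` is injective. -/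
theorem mul_u_injective
    (p k : ℕ) (hp : p.Prime) (hpk : p = 2 * k + 1) :
    letI G := Multiplicative (ZMod 2 × ZMod 2)
    letI R := MonoidAlgebra ℤ G
    letI a : R := MonoidAlgebra.of ℤ G (Multiplicative.ofAdd ((1 : ZMod 2), (0 : ZMod 2)))
    Function.Injective (fun x : R => (((k : R) + 1) + (k : R) * a) * x) := by
  intro x y h
  exact klein_aux p k hp hpk x y h
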